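/- Let A : H1 → H2 be (S,T)-complementable. Then A/(S,T) is the maximum, with respect to the minus order ≤⁻, of the set M⁻(A,S,T) = {C ∈ L(H1,H2) : C ≤⁻ A, R(C) ⊆ T, R(C*) ⊆ S}. -/

import Mathlib

open ContinuousLinearMap Submodule

noncomputable def projC {H : Type*} [NormedAddCommGroup H] [InnerProductSpace ℂ H]
    [CompleteSpace H] (S : Submodule ℂ H) [CompleteSpace S] : H →L[ℂ] H :=
  S.subtypeL ∘L orthogonalProjection S


open Filter

set_option linter.unusedSectionVars false
set_option synthInstance.maxHeartbeats 1000000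
set_option maxHeartbeats 4000000

section Aux

variable {G G₁ G₂ G₃ : Type*} [NormedAddCommGroup G] [InnerProductSpace ℂ G] [CompleteSpace G]
  [NormedAddCommGroup G₁] [InnerProductSpace ℂ G₁] [CompleteSpace G₁]
  [NormedAddCommGroup G₂] [InnerProductSpace ℂ G₂] [CompleteSpace G₂]
  [NormedAddCommGroup G₃] [InnerProductSpace ℂ G₃] [CompleteSpace G₃]

local notation "⟪" x ", " y "⟫" => @inner ℂ _ _ x y

lemma projC_apply_mem (S : Submodule ℂ G) [CompleteSpace S] {x : G} (hx : x ∈ S) :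
    projC S x = x := by
  simp [projC, Submodule.starProjection_eq_self_iff.2 hx]

lemma projC_mem (S : Submodule ℂ G) [CompleteSpace S] (x : G) : projC S x ∈ S := by
  simp [projC]

lemma projC_comp_eq_self {S : Submodule ℂ G} [CompleteSpace S] {u : G₁ →L[ℂ] G}
    (h : LinearMap.range (u : G₁ →ₗ[ℂ] G) ≤ S) : projC S ∘L u = u := by
  ext x; exact projC_apply_mem S (h ⟨x, rfl⟩)

lemma projC_sa (S : Submodule ℂ G) [CompleteSpace S] : adjoint (projC S) = projC S :=
  (isSelfAdjoint_starProjection S).adjoint_eq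

lemma projC_idem (S : Submodule ℂ G) [CompleteSpace S] : projC S ∘L projC S = projC S := by
  ext x; exact projC_apply_mem S (projC_mem S x)

lemma adjoint_one' : adjoint (1 : G →L[ℂ] G) = 1 := by
  have := ContinuousLinearMap.adjoint_id (𝕜 := ℂ) (E := G)
  simpa [ContinuousLinearMap.one_def] using this

lemma adjoint_one_sub_projC (S : Submodule ℂ G) [CompleteSpace S] :
    adjoint (1 - projC S) = 1 - projC S := by
  rw [map_sub adjoint, adjoint_one', projC_sa]

lemma one_sub_cancel {u : G₁ →L[ℂ] G} {pP : G →L[ℂ] G} (h : (1 - pP) ∘L u = 0) :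
    pP ∘L u = u := by
  ext x
  have hx := congrFun (congrArg DFunLike.coe h) x
  simp only [ContinuousLinearMap.comp_apply, ContinuousLinearMap.sub_apply,
    ContinuousLinearMap.one_apply, ContinuousLinearMap.zero_apply] at hx
  have := sub_eq_zero.1 hx
  simpa using this.symm

lemma mem_orth_eq_zero {K : Submodule ℂ G} {x : G} (h1 : x ∈ K) (h2 : x ∈ Kᗮ) : x = 0 := by
  have := h2 x h1
  simpa [inner_self_eq_zero] using this

lemma douglas (B : G₁ →L[ℂ] G₃) (C : G₂ →L[ℂ] G₃)
    (h : LinearMap.range (C : G₂ →ₗ[ℂ] G₃) ≤ LinearMap.range (B : G₁ →ₗ[ℂ] G₃)) :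
    ∃ D : G₂ →L[ℂ] G₁, B ∘L D = C ∧
      LinearMap.range (D : G₂ →ₗ[ℂ] G₁) ≤ (LinearMap.ker (B : G₁ →ₗ[ℂ] G₃))ᗮ := by
  classical
  set K := LinearMap.ker (B : G₁ →ₗ[ℂ] G₃) with hK
  haveI : CompleteSpace K := (ContinuousLinearMap.isClosed_ker B).completeSpace_coe
  haveI : CompleteSpace (Kᗮ : Submodule ℂ G₁) := K.isClosed_orthogonal.completeSpace_coe
  have hex : ∀ y : G₂, ∃ x : G₁, x ∈ Kᗮ ∧ B x = C y := by
    intro y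
    obtain ⟨x, hx⟩ := h (LinearMap.mem_range_self (C : G₂ →ₗ[ℂ] G₃) y)
    refine ⟨projC Kᗮ x, projC_mem _ x, ?_⟩
    have hmem : x - projC Kᗮ x ∈ K := by
      have h1 : x - (orthogonalProjection Kᗮ x : G₁) ∈ Kᗮᗮ :=
        Submodule.sub_starProjection_mem_orthogonal (K := Kᗮ) x
      rwa [Submodule.orthogonal_orthogonal] at h1
    have h0 : B (x - projC Kᗮ x) = 0 := hmem
    rw [map_sub, sub_eq_zero] at h0
    rw [← h0]; exact hx
  have huniq : ∀ x₁ x₂ : G₁, x₁ ∈ Kᗮ → x₂ ∈ Kᗮ → B x₁ = B x₂ → x₁ = x₂ := by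
    intro x₁ x₂ h₁ h₂ hB
    have hk : x₁ - x₂ ∈ K := by
      simp only [hK, LinearMap.mem_ker, map_sub, sub_eq_zero]; exact hB
    exact sub_eq_zero.1 (mem_orth_eq_zero hk (Kᗮ.sub_mem h₁ h₂))
  choose f hf1 hf2 using hex
  have hadd : ∀ y z, f (y + z) = f y + f z := by
    intro y z
    refine huniq _ _ (hf1 _) (Kᗮ.add_mem (hf1 y) (hf1 z)) ?_
    rw [hf2, map_add, map_add, hf2, hf2]
  have hsmul : ∀ (c : ℂ) y, f (c • y) = c • f y := by
    intro c y
    refine huniq _ _ (hf1 _) (Kᗮ.smul_mem c (hf1 y)) ?_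
    rw [hf2, map_smul, map_smul, hf2]
  let lin : G₂ →ₗ[ℂ] G₁ :=
    { toFun := f, map_add' := hadd, map_smul' := hsmul }
  have hcont : Continuous lin := by
    apply LinearMap.continuous_of_seq_closed_graph
    intro u x y hu hfu
    refine huniq _ _ ?_ (hf1 x) ?_
    · exact K.isClosed_orthogonal.mem_of_tendsto hfu (Eventually.of_forall fun n => hf1 (u n))
    · have h1 : Tendsto (fun n => B (f (u n))) atTop (nhds (B y)) :=
        (B.continuous.tendsto y).comp hfu
      have h2 : Tendsto (fun n => C (u n)) atTop (nhds (C x)) :=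
        (C.continuous.tendsto x).comp hu
      have h3 : (fun n => B (f (u n))) = fun n => C (u n) := by
        funext n; exact hf2 (u n)
      rw [h3] at h1
      show B y = B (f x)
      rw [hf2]
      exact tendsto_nhds_unique h1 h2
  refine ⟨⟨lin, hcont⟩, ?_, ?_⟩
  · ext y; exact hf2 y
  · rintro _ ⟨y, rfl⟩; exact hf1 y

lemma pos_sq_inj {X Y : G →L[ℂ] G} (hX : X.IsPositive) (hY : Y.IsPositive)
    (h : X ∘L X = Y ∘L Y) : X = Y := by
  have hX' : (0 : G →L[ℂ] G) ≤ X := (ContinuousLinearMap.nonneg_iff_isPositive X).2 hX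
  have hY' : (0 : G →L[ℂ] G) ≤ Y := (ContinuousLinearMap.nonneg_iff_isPositive Y).2 hY
  have h1 : CFC.sqrt (X * X) = X := CFC.sqrt_unique rfl hX'
  have h2 : CFC.sqrt (Y * Y) = Y := CFC.sqrt_unique rfl hY'
  have h3 : (X * X : G →L[ℂ] G) = Y * Y := h
  rw [← h1, ← h2, h3]

lemma sa_inner_move {B : G →L[ℂ] G} (hB : adjoint B = B) (z w : G) :
    ⟪B z, w⟫ = ⟪z, B w⟫ := by
  conv_lhs => rw [← hB]
  exact ContinuousLinearMap.adjoint_inner_left B w z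

lemma sq_ker {B : G →L[ℂ] G} (hB : adjoint B = B) {u : G} (h : B (B u) = 0) : B u = 0 := by
  have h1 : ⟪B u, B u⟫ = 0 := by
    rw [sa_inner_move hB, h, inner_zero_right]
  exact inner_self_eq_zero.1 h1

lemma mem_closure_range_sq (B : G →L[ℂ] G) (hB : adjoint B = B) (x : G) :
    B x ∈ (LinearMap.range ((B ∘L B : G →L[ℂ] G) : G →ₗ[ℂ] G)).topologicalClosure := by
  rw [← Submodule.orthogonal_orthogonal_eq_closure]
  intro u hu
  have hu' : ∀ z, ⟪B (B z), u⟫ = 0 := fun z => hu _ ⟨z, rfl⟩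
  have hBu : B u = 0 := by
    apply sq_ker hB
    apply ext_inner_right ℂ
    intro z
    rw [sa_inner_move hB, sa_inner_move hB, ← inner_conj_symm, hu' z, map_zero, inner_zero_left]
  rw [← inner_conj_symm, sa_inner_move hB, hBu, inner_zero_right, map_zero]

lemma sandwich_zero {B W : G →L[ℂ] G} (hB : adjoint B = B)
    (h : ((B ∘L B) ∘L W) ∘L (B ∘L B) = 0) : (B ∘L W) ∘L B = 0 := by
  set R := LinearMap.range ((B ∘L B : G →L[ℂ] G) : G →ₗ[ℂ] G) with hR
  have stageA : ∀ u, u ∈ R → ∀ v, v ∈ R.topologicalClosure → ⟪W u, v⟫ = 0 := by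
    rintro _ ⟨a, rfl⟩ v hv
    have hsub : (R : Set G) ⊆ {v | ⟪W ((B ∘L B) a), v⟫ = 0} := by
      rintro _ ⟨b, rfl⟩
      show ⟪W ((B ∘L B) a), (B ∘L B) b⟫ = 0
      have h0 : B (B (W (B (B a)))) = 0 := by
        have := congrFun (congrArg DFunLike.coe h) a
        simpa using this
      simp only [ContinuousLinearMap.comp_apply]
      rw [← sa_inner_move hB, ← sa_inner_move hB, h0, inner_zero_left]
    have hcl : closure (R : Set G) ⊆ {v | ⟪W ((B ∘L B) a), v⟫ = 0} := by
      apply closure_minimal hsub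
      exact isClosed_eq (Continuous.inner continuous_const continuous_id) continuous_const
    have hv' : v ∈ closure (R : Set G) := by rwa [← Submodule.topologicalClosure_coe]
    exact hcl hv'
  have stageB : ∀ u, u ∈ R.topologicalClosure → ∀ v, v ∈ R.topologicalClosure →
      ⟪W u, v⟫ = 0 := by
    intro u hu v hv
    have hsub : (R : Set G) ⊆ {z | ⟪W z, v⟫ = 0} := fun z hz => stageA z hz v hv
    have hcl : closure (R : Set G) ⊆ {z | ⟪W z, v⟫ = 0} := by
      apply closure_minimal hsub
      exact isClosed_eq (Continuous.inner (W.continuous.comp continuous_id) continuous_const)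
        continuous_const
    have hu' : u ∈ closure (R : Set G) := by rwa [← Submodule.topologicalClosure_coe]
    exact hcl hu'
  ext x
  show B (W (B x)) = 0
  apply ext_inner_right ℂ
  intro y
  rw [sa_inner_move hB, stageB _ (mem_closure_range_sq B hB x) _ (mem_closure_range_sq B hB y),
    inner_zero_left]

end Aux


variable {H₁ H₂ : Type*} [NormedAddCommGroup H₁] [InnerProductSpace ℂ H₁] [CompleteSpace H₁]
  [NormedAddCommGroup H₂] [InnerProductSpace ℂ H₂] [CompleteSpace H₂]

noncomputable def blk11 (S : Submodule ℂ H₁) [CompleteSpace S]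
    (T : Submodule ℂ H₂) [CompleteSpace T] (A : H₁ →L[ℂ] H₂) : H₁ →L[ℂ] H₂ :=
  projC T ∘L A ∘L projC S

noncomputable def blk12 (S : Submodule ℂ H₁) [CompleteSpace S]
    (T : Submodule ℂ H₂) [CompleteSpace T] (A : H₁ →L[ℂ] H₂) : H₁ →L[ℂ] H₂ :=
  projC T ∘L A ∘L (1 - projC S)

noncomputable def blk21 (S : Submodule ℂ H₁) [CompleteSpace S]
    (T : Submodule ℂ H₂) [CompleteSpace T] (A : H₁ →L[ℂ] H₂) : H₁ →L[ℂ] H₂ :=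
  (1 - projC T) ∘L A ∘L projC S

noncomputable def blk22 (S : Submodule ℂ H₁) [CompleteSpace S]
    (T : Submodule ℂ H₂) [CompleteSpace T] (A : H₁ →L[ℂ] H₂) : H₁ →L[ℂ] H₂ :=
  (1 - projC T) ∘L A ∘L (1 - projC S)

/-- `As` is the bilateral shorted operator `A/(S,T)`: there are `Bh = |A22|^(1/2)`,
`Dh = |A22*|^(1/2)` (unique positive fourth roots of `A22* A22` resp. `A22 A22*`),
`U` the partial isometry of the polar decomposition of `A22`, and `E`, `F` the reduced
Douglas solutions of `A21 = |A22*|^(1/2) U X` and `A12* = |A22|^(1/2) X`, with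
`As = A11 - F* E`. -/
def IsShorted (S : Submodule ℂ H₁) [CompleteSpace S] (T : Submodule ℂ H₂) [CompleteSpace T]
    (A As : H₁ →L[ℂ] H₂) : Prop :=
  ∃ (Bh : H₁ →L[ℂ] H₁) (Dh : H₂ →L[ℂ] H₂) (U : H₁ →L[ℂ] H₂) (E : H₁ →L[ℂ] H₁)
      (F : H₂ →L[ℂ] H₁),
    Bh.IsPositive ∧
    Bh ∘L Bh ∘L Bh ∘L Bh = adjoint (blk22 S T A) ∘L blk22 S T A ∧
    Dh.IsPositive ∧
    Dh ∘L Dh ∘L Dh ∘L Dh = blk22 S T A ∘L adjoint (blk22 S T A) ∧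
    blk22 S T A = U ∘L (Bh ∘L Bh) ∧
    (∀ x, blk22 S T A x = 0 → U x = 0) ∧
    (Dh ∘L U) ∘L E = blk21 S T A ∧
    LinearMap.range (E : H₁ →ₗ[ℂ] H₁) ≤ (LinearMap.ker (Dh ∘L U : H₁ →ₗ[ℂ] H₂))ᗮ ∧
    Bh ∘L F = adjoint (blk12 S T A) ∧
    LinearMap.range (F : H₂ →ₗ[ℂ] H₁) ≤ (LinearMap.ker (Bh : H₁ →ₗ[ℂ] H₁))ᗮ ∧
    As = blk11 S T A - adjoint F ∘L E

/-- `A` is `(S,T)`-complementable. -/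
def IsComplementable (S : Submodule ℂ H₁) [CompleteSpace S] (T : Submodule ℂ H₂)
    [CompleteSpace T] (A : H₁ →L[ℂ] H₂) : Prop :=
  LinearMap.range (blk21 S T A : H₁ →ₗ[ℂ] H₂) ≤ LinearMap.range (blk22 S T A : H₁ →ₗ[ℂ] H₂) ∧
  LinearMap.range (adjoint (blk12 S T A) : H₂ →ₗ[ℂ] H₁) ≤ LinearMap.range (adjoint (blk22 S T A) : H₂ →ₗ[ℂ] H₁)

/-- The minus order, via projections. -/
def minusLE {K₁ K₂ : Type*} [NormedAddCommGroup K₁] [InnerProductSpace ℂ K₁]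
    [CompleteSpace K₁] [NormedAddCommGroup K₂] [InnerProductSpace ℂ K₂] [CompleteSpace K₂]
    (C A : K₁ →L[ℂ] K₂) : Prop :=
  ∃ (Q : K₂ →L[ℂ] K₂) (P : K₁ →L[ℂ] K₁),
    IsIdempotentElem Q ∧ IsIdempotentElem P ∧
    C = Q ∘L A ∧ adjoint C = P ∘L adjoint A

local notation "⟪" x ", " y "⟫" => @inner ℂ _ _ x y

theorem shorted_is_max_minus
    (S : Submodule ℂ H₁) [CompleteSpace S] (T : Submodule ℂ H₂) [CompleteSpace T]
    (A As : H₁ →L[ℂ] H₂) (hc : IsComplementable S T A) (hAs : IsShorted S T A As) :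
    (minusLE As A ∧ LinearMap.range (As : H₁ →ₗ[ℂ] H₂) ≤ T ∧ LinearMap.range (adjoint As : H₂ →ₗ[ℂ] H₁) ≤ S) ∧
    (∀ C : H₁ →L[ℂ] H₂, minusLE C A → LinearMap.range (C : H₁ →ₗ[ℂ] H₂) ≤ T →
      LinearMap.range (adjoint C : H₂ →ₗ[ℂ] H₁) ≤ S → minusLE C As) := by
  classical
  obtain ⟨hc1, hc2⟩ := hc
  obtain ⟨Bh, Dh, U, E, F, hBpos, hB4, hDpos, hD4, hA22U, hUker, hE, hEr, hF, hFr, hAsdef⟩ := hAs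
  have hBsa : adjoint Bh = Bh := hBpos.isSelfAdjoint.adjoint_eq
  have hDsa : adjoint Dh = Dh := hDpos.isSelfAdjoint.adjoint_eq
  have pE : ∀ x, Dh (U (E x)) = blk21 S T A x := by
    intro x; have := congrFun (congrArg DFunLike.coe hE) x
    simpa using this
  have pF : ∀ y, Bh (F y) = adjoint (blk12 S T A) y := by
    intro y; have := congrFun (congrArg DFunLike.coe hF) y
    simpa using this
  have pA22 : ∀ x, blk22 S T A x = U (Bh (Bh x)) := by
    intro x; rw [hA22U]; rfl
  have pAdjA22 : ∀ y, adjoint (blk22 S T A) y = Bh (Bh (adjoint U y)) := by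
    intro y
    conv_lhs => rw [hA22U]
    rw [adjoint_comp, adjoint_comp, hBsa]
    rfl
  have pB4 : ∀ x, Bh (Bh (Bh (Bh x))) = Bh (Bh (adjoint U (U (Bh (Bh x))))) := by
    intro x
    have h := congrFun (congrArg DFunLike.coe hB4) x
    simp only [ContinuousLinearMap.comp_apply] at h
    rw [h, pA22, pAdjA22]
  have pD4 : ∀ y, Dh (Dh (Dh (Dh y))) = blk22 S T A (adjoint (blk22 S T A) y) := by
    intro y
    have h := congrFun (congrArg DFunLike.coe hD4) y
    simp only [ContinuousLinearMap.comp_apply] at h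
    exact h
  have claimA2 : ((Bh ∘L Bh) ∘L (adjoint U ∘L U - 1)) ∘L (Bh ∘L Bh) = 0 := by
    ext x
    simp only [ContinuousLinearMap.comp_apply, ContinuousLinearMap.sub_apply,
      ContinuousLinearMap.one_apply, ContinuousLinearMap.zero_apply, map_sub]
    rw [← pB4 x, sub_self]
  have claimA := sandwich_zero hBsa claimA2
  have pW : ∀ x, Bh (adjoint U (U (Bh x))) = Bh (Bh x) := by
    intro x
    have h := congrFun (congrArg DFunLike.coe claimA) x
    simp only [ContinuousLinearMap.comp_apply, ContinuousLinearMap.sub_apply,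
      ContinuousLinearMap.one_apply, ContinuousLinearMap.zero_apply, map_sub] at h
    exact sub_eq_zero.1 h
  have hRpos : (U ∘L Bh ∘L adjoint U).IsPositive := hBpos.conj_adjoint U
  have hB2pos : ((Bh ∘L Bh)).IsPositive := by
    have h := (ContinuousLinearMap.isPositive_one (E := H₁)).conj_adjoint Bh
    have h2 : Bh ∘L (1 : H₁ →L[ℂ] H₁) ∘L adjoint Bh = Bh ∘L Bh := by
      ext x; simp [hBsa]
    rwa [h2] at h
  have hD2pos : ((Dh ∘L Dh)).IsPositive := by
    have h := (ContinuousLinearMap.isPositive_one (E := H₂)).conj_adjoint Dh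
    have h2 : Dh ∘L (1 : H₂ →L[ℂ] H₂) ∘L adjoint Dh = Dh ∘L Dh := by
      ext x; simp [hDsa]
    rwa [h2] at h
  set R : H₂ →L[ℂ] H₂ := U ∘L Bh ∘L adjoint U with hRdef
  have pR : ∀ y, R y = U (Bh (adjoint U y)) := fun y => rfl
  have hR2 : R ∘L R = U ∘L (Bh ∘L Bh) ∘L adjoint U := by
    ext y
    simp only [ContinuousLinearMap.comp_apply, pR]
    exact congrArg U (pW (adjoint U y))
  have hR2pos : (R ∘L R).IsPositive := by
    rw [hR2]; exact hB2pos.conj_adjoint U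
  have pR2 : ∀ z, (R ∘L R) z = U (Bh (Bh (adjoint U z))) := by
    intro z; exact congrFun (congrArg DFunLike.coe hR2) z
  have hR4 : (R ∘L R) ∘L (R ∘L R) = (Dh ∘L Dh) ∘L (Dh ∘L Dh) := by
    ext y
    show (R ∘L R) ((R ∘L R) y) = (Dh ∘L Dh) ((Dh ∘L Dh) y)
    rw [pR2 ((R ∘L R) y), pR2 y]
    show _ = Dh (Dh (Dh (Dh y)))
    rw [← pB4 (adjoint U y), pD4, pA22, pAdjA22]
  have hR2D : R ∘L R = Dh ∘L Dh := pos_sq_inj hR2pos hD2pos hR4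
  have hRD : R = Dh := pos_sq_inj hRpos hDpos hR2D
  have pDh : ∀ y, Dh y = U (Bh (adjoint U y)) := by
    intro y; rw [← hRD]; rfl
  obtain ⟨M, hM, hMr⟩ := douglas (blk22 S T A) (blk21 S T A) hc1
  obtain ⟨N, hN, hNr⟩ := douglas (adjoint (blk22 S T A)) (adjoint (blk12 S T A)) hc2
  have pM : ∀ x, blk22 S T A (M x) = blk21 S T A x := by
    intro x; have := congrFun (congrArg DFunLike.coe hM) x; simpa using this
  have pN : ∀ y, adjoint (blk22 S T A) (N y) = adjoint (blk12 S T A) y := by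
    intro y; have := congrFun (congrArg DFunLike.coe hN) y; simpa using this
  have pPidem : ∀ x, projC S (projC S x) = projC S x :=
    fun x => projC_apply_mem S (projC_mem S x)
  have pTidem : ∀ y, projC T (projC T y) = projC T y :=
    fun y => projC_apply_mem T (projC_mem T y)
  have p1P : ∀ x, projC S ((1 - projC S) x) = 0 := by
    intro x
    simp only [ContinuousLinearMap.sub_apply, ContinuousLinearMap.one_apply, map_sub, pPidem]
    exact sub_self _
  have p1T : ∀ y, projC T ((1 - projC T) y) = 0 := by
    intro y
    simp only [ContinuousLinearMap.sub_apply, ContinuousLinearMap.one_apply, map_sub, pTidem]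
    exact sub_self _
  have pblk11 : ∀ x, blk11 S T A x = projC T (A (projC S x)) := fun _ => rfl
  have pblk12 : ∀ x, blk12 S T A x = projC T (A ((1 - projC S) x)) := fun _ => rfl
  have pblk21 : ∀ x, blk21 S T A x = (1 - projC T) (A (projC S x)) := fun _ => rfl
  have pblk22 : ∀ x, blk22 S T A x = (1 - projC T) (A ((1 - projC S) x)) := fun _ => rfl
  have padj11 : ∀ y, adjoint (blk11 S T A) y = projC S (adjoint A (projC T y)) := by
    intro y
    show adjoint (projC T ∘L (A ∘L projC S)) y = _
    rw [adjoint_comp, adjoint_comp, projC_sa, projC_sa]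
    rfl
  have padj12 : ∀ y, adjoint (blk12 S T A) y = (1 - projC S) (adjoint A (projC T y)) := by
    intro y
    show adjoint (projC T ∘L (A ∘L (1 - projC S))) y = _
    rw [adjoint_comp, adjoint_comp, projC_sa, adjoint_one_sub_projC]
    rfl
  have padj21 : ∀ y, adjoint (blk21 S T A) y = projC S (adjoint A ((1 - projC T) y)) := by
    intro y
    show adjoint ((1 - projC T) ∘L (A ∘L projC S)) y = _
    rw [adjoint_comp, adjoint_comp, projC_sa, adjoint_one_sub_projC]
    rfl
  have padj22 : ∀ y, adjoint (blk22 S T A) y = (1 - projC S) (adjoint A ((1 - projC T) y)) := by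
    intro y
    show adjoint ((1 - projC T) ∘L (A ∘L (1 - projC S))) y = _
    rw [adjoint_comp, adjoint_comp, adjoint_one_sub_projC, adjoint_one_sub_projC]
    rfl
  have pblk21z : ∀ x, blk21 S T A ((1 - projC S) x) = 0 := by
    intro x; rw [pblk21, p1P, map_zero, map_zero]
  have padj12z : ∀ y, adjoint (blk12 S T A) ((1 - projC T) y) = 0 := by
    intro y; rw [padj12, p1T, map_zero, map_zero]
  have hMP : M ∘L (1 - projC S) = 0 := by
    ext x
    have h1 : M ((1 - projC S) x) ∈ LinearMap.ker (blk22 S T A : H₁ →ₗ[ℂ] H₂) := by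
      show blk22 S T A (M ((1 - projC S) x)) = 0
      rw [pM, pblk21z]
    have h2 := hMr (LinearMap.mem_range_self (M : H₁ →ₗ[ℂ] H₁) ((1 - projC S) x))
    simpa using mem_orth_eq_zero h1 h2
  have hNT : N ∘L (1 - projC T) = 0 := by
    ext y
    have h1 : N ((1 - projC T) y) ∈ LinearMap.ker (adjoint (blk22 S T A) : H₂ →ₗ[ℂ] H₁) := by
      show adjoint (blk22 S T A) (N ((1 - projC T) y)) = 0
      rw [pN, padj12z]
    have h2 := hNr (LinearMap.mem_range_self (N : H₂ →ₗ[ℂ] H₂) ((1 - projC T) y))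
    simpa using mem_orth_eq_zero h1 h2
  have hFT : F ∘L (1 - projC T) = 0 := by
    ext y
    have h1 : F ((1 - projC T) y) ∈ LinearMap.ker (Bh : H₁ →ₗ[ℂ] H₁) := by
      show Bh (F ((1 - projC T) y)) = 0
      rw [pF, padj12z]
    have h2 := hFr (LinearMap.mem_range_self (F : H₂ →ₗ[ℂ] H₁) ((1 - projC T) y))
    simpa using mem_orth_eq_zero h1 h2
  have hEP : E ∘L (1 - projC S) = 0 := by
    ext x
    have h1 : E ((1 - projC S) x) ∈ LinearMap.ker (Dh ∘L U : H₁ →ₗ[ℂ] H₂) := by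
      show Dh (U (E ((1 - projC S) x))) = 0
      rw [pE, pblk21z]
    have h2 := hEr (LinearMap.mem_range_self (E : H₁ →ₗ[ℂ] H₁) ((1 - projC S) x))
    simpa using mem_orth_eq_zero h1 h2
  have hNT' : projC T ∘L adjoint N = adjoint N := by
    apply one_sub_cancel
    have := congrArg adjoint hNT
    rwa [adjoint_comp, adjoint_one_sub_projC, map_zero] at this
  have hMP' : projC S ∘L adjoint M = adjoint M := by
    apply one_sub_cancel
    have := congrArg adjoint hMP
    rwa [adjoint_comp, adjoint_one_sub_projC, map_zero] at this
  have hFT' : projC T ∘L adjoint F = adjoint F := by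
    apply one_sub_cancel
    have := congrArg adjoint hFT
    rwa [adjoint_comp, adjoint_one_sub_projC, map_zero] at this
  have hEP' : projC S ∘L adjoint E = adjoint E := by
    apply one_sub_cancel
    have := congrArg adjoint hEP
    rwa [adjoint_comp, adjoint_one_sub_projC, map_zero] at this
  -- key identity F* E = N* blk21
  have hJ : ∀ y, Bh (F y - adjoint (Dh ∘L U) (N y)) = 0 := by
    intro y
    rw [map_sub]
    have h1 : adjoint (Dh ∘L U) (N y) = adjoint U (Dh (N y)) := by
      rw [adjoint_comp, hDsa]; rfl
    rw [h1, pDh (N y), pW (adjoint U (N y)), ← pAdjA22, pN, ← pF, sub_self]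
  have hJker : ∀ y, (Dh ∘L U) (F y - adjoint (Dh ∘L U) (N y)) = 0 := by
    intro y
    have hU0 : U (F y - adjoint (Dh ∘L U) (N y)) = 0 := by
      apply hUker
      rw [pA22, hJ y, map_zero, map_zero]
    show Dh (U _) = 0
    rw [hU0, map_zero]
  have keyFE : ∀ x, adjoint F (E x) = adjoint N (blk21 S T A x) := by
    intro x
    apply ext_inner_right ℂ
    intro y
    rw [ContinuousLinearMap.adjoint_inner_left, ContinuousLinearMap.adjoint_inner_left]
    rw [← pE x]
    have hmove : ⟪Dh (U (E x)), N y⟫ = ⟪E x, adjoint (Dh ∘L U) (N y)⟫ := by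
      rw [← ContinuousLinearMap.comp_apply Dh U,
        ← ContinuousLinearMap.adjoint_inner_right (Dh ∘L U) (E x) (N y)]
    rw [hmove]
    have horth : ⟪E x, F y - adjoint (Dh ∘L U) (N y)⟫ = 0 := by
      rw [← inner_conj_symm]
      rw [show ⟪F y - adjoint (Dh ∘L U) (N y), E x⟫ = 0 from
        hEr (LinearMap.mem_range_self (E : H₁ →ₗ[ℂ] H₁) x) _ (hJker y), map_zero]
    rw [inner_sub_right] at horth
    exact sub_eq_zero.1 horth
  have keyFEop : adjoint F ∘L E = adjoint N ∘L blk21 S T A := by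
    ext x; exact keyFE x
  have hNA22 : adjoint N ∘L blk22 S T A = blk12 S T A := by
    have h := congrArg adjoint hN
    rwa [adjoint_comp, adjoint_adjoint, adjoint_adjoint] at h
  have pNA22 : ∀ x, adjoint N (blk22 S T A x) = blk12 S T A x := by
    intro x; exact congrFun (congrArg DFunLike.coe hNA22) x
  have hMA22 : adjoint M ∘L adjoint (blk22 S T A) = adjoint (blk21 S T A) := by
    have h := congrArg adjoint hM
    rwa [adjoint_comp] at h
  have pMA22 : ∀ y, adjoint M (adjoint (blk22 S T A) y) = adjoint (blk21 S T A) y := by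
    intro y; exact congrFun (congrArg DFunLike.coe hMA22) y
  have keyEFop : adjoint E ∘L F = adjoint M ∘L adjoint (blk12 S T A) := by
    have h := congrArg adjoint keyFEop
    rw [adjoint_comp, adjoint_adjoint, adjoint_comp, adjoint_adjoint] at h
    rw [h, ← hMA22, ContinuousLinearMap.comp_assoc, hN]
  have pEF : ∀ y, adjoint E (F y) = adjoint M (adjoint (blk12 S T A) y) := by
    intro y; exact congrFun (congrArg DFunLike.coe keyEFop) y
  -- Q and Pp
  set Q : H₂ →L[ℂ] H₂ := projC T - adjoint N ∘L (1 - projC T) with hQdef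
  set Pp : H₁ →L[ℂ] H₁ := projC S - adjoint M ∘L (1 - projC S) with hPpdef
  have idemQ : IsIdempotentElem Q := by
    show Q * Q = Q
    have e1 : projC T * projC T = projC T := projC_idem T
    have e2 : projC T * adjoint N = adjoint N := hNT'
    have e3 : (1 - projC T) * adjoint N = 0 := by
      rw [sub_mul, one_mul, e2, sub_self]
    have e4 : (1 - projC T) * projC T = 0 := by
      rw [sub_mul, one_mul, e1, sub_self]
    have hQm : Q = projC T - adjoint N * (1 - projC T) := rfl
    rw [hQm]
    calc (projC T - adjoint N * (1 - projC T)) * (projC T - adjoint N * (1 - projC T))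
        = projC T * projC T - (projC T * adjoint N) * (1 - projC T)
          - adjoint N * ((1 - projC T) * projC T)
          + adjoint N * (((1 - projC T) * adjoint N) * (1 - projC T)) := by noncomm_ring
      _ = projC T - adjoint N * (1 - projC T) := by
          rw [e1, e2, e3, e4]; noncomm_ring
  have idemPp : IsIdempotentElem Pp := by
    show Pp * Pp = Pp
    have e1 : projC S * projC S = projC S := projC_idem S
    have e2 : projC S * adjoint M = adjoint M := hMP'
    have e3 : (1 - projC S) * adjoint M = 0 := by
      rw [sub_mul, one_mul, e2, sub_self]
    have e4 : (1 - projC S) * projC S = 0 := by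
      rw [sub_mul, one_mul, e1, sub_self]
    have hPm : Pp = projC S - adjoint M * (1 - projC S) := rfl
    rw [hPm]
    calc (projC S - adjoint M * (1 - projC S)) * (projC S - adjoint M * (1 - projC S))
        = projC S * projC S - (projC S * adjoint M) * (1 - projC S)
          - adjoint M * ((1 - projC S) * projC S)
          + adjoint M * (((1 - projC S) * adjoint M) * (1 - projC S)) := by noncomm_ring
      _ = projC S - adjoint M * (1 - projC S) := by
          rw [e1, e2, e3, e4]; noncomm_ring
  have pAs : ∀ x, As x = blk11 S T A x - adjoint F (E x) := by
    intro x; rw [hAsdef]; rfl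
  have prows1 : ∀ x, projC T (A x) = blk11 S T A x + blk12 S T A x := by
    intro x
    rw [pblk11, pblk12]
    simp only [ContinuousLinearMap.sub_apply, ContinuousLinearMap.one_apply, map_sub]
    abel
  have prows2 : ∀ x, (1 - projC T) (A x) = blk21 S T A x + blk22 S T A x := by
    intro x
    rw [pblk21, pblk22]
    simp only [ContinuousLinearMap.sub_apply, ContinuousLinearMap.one_apply, map_sub]
    abel
  have hQA : Q ∘L A = As := by
    ext x
    show projC T (A x) - adjoint N ((1 - projC T) (A x)) = As x
    rw [prows1, prows2, map_add, pNA22, ← keyFE, pAs]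
    abel
  have pAs' : ∀ y, adjoint As y = adjoint (blk11 S T A) y - adjoint E (F y) := by
    intro y
    rw [hAsdef, map_sub adjoint, adjoint_comp, adjoint_adjoint]
    rfl
  have prows1' : ∀ y, projC S (adjoint A y)
      = adjoint (blk11 S T A) y + adjoint (blk21 S T A) y := by
    intro y
    rw [padj11, padj21]
    simp only [ContinuousLinearMap.sub_apply, ContinuousLinearMap.one_apply, map_sub]
    abel
  have prows2' : ∀ y, (1 - projC S) (adjoint A y)
      = adjoint (blk12 S T A) y + adjoint (blk22 S T A) y := by
    intro y
    rw [padj12, padj22]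
    simp only [ContinuousLinearMap.sub_apply, ContinuousLinearMap.one_apply, map_sub]
    abel
  have hPpA : Pp ∘L adjoint A = adjoint As := by
    ext y
    show projC S (adjoint A y) - adjoint M ((1 - projC S) (adjoint A y)) = adjoint As y
    rw [prows1', prows2', map_add, pMA22, ← pEF, pAs']
    abel
  -- range facts
  have pAsT : ∀ x, projC T (As x) = As x := by
    intro x
    rw [pAs, map_sub, pblk11, pTidem]
    have hft : projC T (adjoint F (E x)) = adjoint F (E x) :=
      congrFun (congrArg DFunLike.coe hFT') (E x)
    rw [hft, ← pblk11, ← pAs]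
  have ranAsT : LinearMap.range (As : H₁ →ₗ[ℂ] H₂) ≤ T := by
    rintro _ ⟨x, rfl⟩
    show As x ∈ T
    rw [← pAsT x]
    exact projC_mem T _
  have pAsS : ∀ y, projC S (adjoint As y) = adjoint As y := by
    intro y
    rw [pAs', map_sub, padj11, pPidem]
    have hes : projC S (adjoint E (F y)) = adjoint E (F y) :=
      congrFun (congrArg DFunLike.coe hEP') (F y)
    rw [hes, ← padj11, ← pAs']
  have ranAsS : LinearMap.range (adjoint As : H₂ →ₗ[ℂ] H₁) ≤ S := by
    rintro _ ⟨y, rfl⟩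
    show adjoint As y ∈ S
    rw [← pAsS y]
    exact projC_mem S _
  refine ⟨⟨⟨Q, Pp, idemQ, idemPp, hQA.symm, hPpA.symm⟩, ranAsT, ranAsS⟩, ?_⟩
  -- maximality
  intro C hCm hCT2 hCS2
  obtain ⟨q, p, hq, hp, hCq, hCp⟩ := hCm
  have htC : projC T ∘L C = C := projC_comp_eq_self hCT2
  have hPC : projC S ∘L adjoint C = adjoint C := projC_comp_eq_self hCS2
  have ptC : ∀ x, projC T (C x) = C x := fun x =>
    congrFun (congrArg DFunLike.coe htC) x
  have pPC : ∀ y, projC S (adjoint C y) = adjoint C y := fun y =>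
    congrFun (congrArg DFunLike.coe hPC) y
  have hCp' : C = A ∘L adjoint p := by
    have h := congrArg adjoint hCp
    rwa [adjoint_adjoint, adjoint_comp, adjoint_adjoint] at h
  have hCq' : adjoint C = adjoint A ∘L adjoint q := by
    have h := congrArg adjoint hCq
    rwa [adjoint_comp] at h
  have QC : Q ∘L C = C := by
    ext x
    show projC T (C x) - adjoint N ((1 - projC T) (C x)) = C x
    have h0 : (1 - projC T) (C x) = 0 := by
      show C x - projC T (C x) = 0
      rw [ptC x, sub_self]
    rw [h0, map_zero, sub_zero, ptC]
  have PpC : Pp ∘L adjoint C = adjoint C := by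
    ext y
    show projC S (adjoint C y) - adjoint M ((1 - projC S) (adjoint C y)) = adjoint C y
    have h0 : (1 - projC S) (adjoint C y) = 0 := by
      show adjoint C y - projC S (adjoint C y) = 0
      rw [pPC y, sub_self]
    rw [h0, map_zero, sub_zero, pPC]
  have hId1 : As ∘L adjoint p = C := by
    rw [← hQA, ContinuousLinearMap.comp_assoc, ← hCp', QC]
  have hId2 : adjoint As ∘L adjoint q = adjoint C := by
    rw [← hPpA, ContinuousLinearMap.comp_assoc, ← hCq', PpC]
  have hqAs : q ∘L As = C := by
    have h := congrArg adjoint hId2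
    rwa [adjoint_comp, adjoint_adjoint, adjoint_adjoint, adjoint_adjoint] at h
  have hpAs' : p ∘L adjoint As = adjoint C := by
    have h := congrArg adjoint hId1
    rwa [adjoint_comp, adjoint_adjoint] at h
  have pqAs : ∀ x, q (As x) = C x := fun x =>
    congrFun (congrArg DFunLike.coe hqAs) x
  have ppAs' : ∀ y, p (adjoint As y) = adjoint C y := fun y =>
    congrFun (congrArg DFunLike.coe hpAs') y
  have pqq : ∀ z, q (q z) = q z := by
    intro z
    have := congrFun (congrArg DFunLike.coe hq.eq) z
    simpa [ContinuousLinearMap.mul_apply] using this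
  have ppp : ∀ z, p (p z) = p z := by
    intro z
    have := congrFun (congrArg DFunLike.coe hp.eq) z
    simpa [ContinuousLinearMap.mul_apply] using this
  have pqC : ∀ x, q (C x) = C x := by
    intro x
    have h : C x = q (A x) := congrFun (congrArg DFunLike.coe hCq) x
    rw [h, pqq]
  have ppC : ∀ y, p (adjoint C y) = adjoint C y := by
    intro y
    have h : adjoint C y = p (adjoint A y) := congrFun (congrArg DFunLike.coe hCp) y
    rw [h, ppp]
  have ranC : LinearMap.range (C : H₁ →ₗ[ℂ] H₂) ≤ LinearMap.range (As : H₁ →ₗ[ℂ] H₂) := by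
    rintro _ ⟨x, rfl⟩
    exact ⟨adjoint p x, congrFun (congrArg DFunLike.coe hId1) x⟩
  have ranC' : LinearMap.range (adjoint C : H₂ →ₗ[ℂ] H₁) ≤ LinearMap.range (adjoint As : H₂ →ₗ[ℂ] H₁) := by
    rintro _ ⟨y, rfl⟩
    exact ⟨adjoint q y, congrFun (congrArg DFunLike.coe hId2) y⟩
  -- closures of ranges
  set M2 := (LinearMap.range (As : H₁ →ₗ[ℂ] H₂)).topologicalClosure with hM2def
  haveI : CompleteSpace M2 := (LinearMap.range (As : H₁ →ₗ[ℂ] H₂)).isClosed_topologicalClosure.completeSpace_coe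
  have hAsM2 : ∀ x, As x ∈ M2 :=
    fun x => (LinearMap.range (As : H₁ →ₗ[ℂ] H₂)).le_topologicalClosure ⟨x, rfl⟩
  have hM2closed : IsClosed (M2 : Set H₂) := (LinearMap.range (As : H₁ →ₗ[ℂ] H₂)).isClosed_topologicalClosure
  have hqM2 : ∀ z, z ∈ M2 → q z ∈ M2 := by
    intro z hz
    have hsub : (LinearMap.range (As : H₁ →ₗ[ℂ] H₂) : Set H₂) ⊆ q ⁻¹' (M2 : Set H₂) := by
      rintro _ ⟨x, rfl⟩
      show q (As x) ∈ M2
      rw [pqAs]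
      exact (LinearMap.range (As : H₁ →ₗ[ℂ] H₂)).le_topologicalClosure (ranC ⟨x, rfl⟩)
    have hcl := closure_minimal hsub (hM2closed.preimage q.continuous)
    have hz' : z ∈ closure (LinearMap.range (As : H₁ →ₗ[ℂ] H₂) : Set H₂) := by
      rwa [← Submodule.topologicalClosure_coe]
    exact hcl hz'
  have hqq2 : ∀ z, z ∈ M2 → q (q z) = q z := fun z _ => pqq z
  set M1 := (LinearMap.range (adjoint As : H₂ →ₗ[ℂ] H₁)).topologicalClosure with hM1def
  haveI : CompleteSpace M1 :=
    (LinearMap.range (adjoint As : H₂ →ₗ[ℂ] H₁)).isClosed_topologicalClosure.completeSpace_coe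
  have hAsM1 : ∀ y, adjoint As y ∈ M1 :=
    fun y => (LinearMap.range (adjoint As : H₂ →ₗ[ℂ] H₁)).le_topologicalClosure ⟨y, rfl⟩
  have hpM1 : ∀ z, z ∈ M1 → p z ∈ M1 := by
    intro z hz
    have hsub : (LinearMap.range (adjoint As : H₂ →ₗ[ℂ] H₁) : Set H₁) ⊆ p ⁻¹' (M1 : Set H₁) := by
      rintro _ ⟨y, rfl⟩
      show p (adjoint As y) ∈ M1
      rw [ppAs']
      exact (LinearMap.range (adjoint As : H₂ →ₗ[ℂ] H₁)).le_topologicalClosure (ranC' ⟨y, rfl⟩)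
    have hcl := closure_minimal hsub
      ((LinearMap.range (adjoint As : H₂ →ₗ[ℂ] H₁)).isClosed_topologicalClosure.preimage p.continuous)
    have hz' : z ∈ closure (LinearMap.range (adjoint As : H₂ →ₗ[ℂ] H₁) : Set H₁) := by
      rwa [← Submodule.topologicalClosure_coe]
    exact hcl hz'
  refine ⟨q ∘L projC M2, p ∘L projC M1, ?_, ?_, ?_, ?_⟩
  · show (q ∘L projC M2) * (q ∘L projC M2) = q ∘L projC M2
    ext x
    show q (projC M2 (q (projC M2 x))) = q (projC M2 x)
    rw [projC_apply_mem M2 (hqM2 _ (projC_mem M2 x)), pqq]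
  · show (p ∘L projC M1) * (p ∘L projC M1) = p ∘L projC M1
    ext y
    show p (projC M1 (p (projC M1 y))) = p (projC M1 y)
    rw [projC_apply_mem M1 (hpM1 _ (projC_mem M1 y)), ppp]
  · ext x
    show C x = q (projC M2 (As x))
    rw [projC_apply_mem M2 (hAsM2 x), pqAs]
  · ext y
    show adjoint C y = p (projC M1 (adjoint As y))
    rw [projC_apply_mem M1 (hAsM1 y), ppAs']
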